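/- Define on dominant weights λ of p(n) the invariant κ(λ) = Σ_{i ∈ c_λ} (-1)^i where c_λ = {λᵢ + n - i : 1 ≤ i ≤ n}. Consider the equivalence relation on weight diagrams generated by: μ ~ λ if d_μ is obtained from d_λ by sliding a black ball along a solid or dashed arrow. Then two dominant weights λ, μ are equivalent if and only if κ(λ) = κ(μ). Moreover κ takes exactly the n+1 values {-n, -n+2, ..., n-2, n}. -/

import Mathlib

/-- The ±1 marker of a weight diagram `f : ℤ → {0,1}`: `g(i) = (-1)^(f(i)+1)`,
i.e. `1` on black balls and `-1` on empty positions. -/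
def bg (f : ℤ → ℤ) (i : ℤ) : ℤ := if f i = 1 then 1 else -1

/-- `r⁺(i,j) = Σ_{s=j}^{i-1} g(s)`. -/
noncomputable def rpl (f : ℤ → ℤ) (i j : ℤ) : ℤ := ∑ s ∈ Finset.Icc j (i - 1), bg f s

/-- `r⁻(i,j) = -Σ_{s=j+1}^{i} g(s)`. -/
noncomputable def rmi (f : ℤ → ℤ) (i j : ℤ) : ℤ := -∑ s ∈ Finset.Icc (j + 1) i, bg f s

/-- The set `⟵i▲(f)` of targets of solid arrows starting at position `i`:
`{j < i : r⁺(i,j) = 0 and r⁺(i,s) ≥ 0 for all j < s < i}`. -/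
def solidT (f : ℤ → ℤ) (i : ℤ) : Set ℤ :=
  {j | j < i ∧ rpl f i j = 0 ∧ ∀ s, j < s → s < i → 0 ≤ rpl f i s}

/-- The set `j⇢▼(f)` of targets of dashed arrows starting at position `j`:
`{i > j : r⁻(i,j) = 0 and r⁻(s,j) ≥ 0 for all j < s < i}`. -/
def dashT (f : ℤ → ℤ) (j : ℤ) : Set ℤ :=
  {i | j < i ∧ rmi f i j = 0 ∧ ∀ s, j < s → s < i → 0 ≤ rmi f s j}

/-- `f : ℤ → ℤ` is a weight diagram with `n` black balls: it takes values in `{0,1}`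
and has exactly `n` positions with value `1`. -/
def IsWD (f : ℤ → ℤ) (n : ℕ) : Prop :=
  (∀ i, f i = 0 ∨ f i = 1) ∧ {i | f i = 1}.Finite ∧ {i | f i = 1}.ncard = n

/-- `κ(f) = Σ_{i ∈ c_f} (-1)^i`, the block invariant of a weight diagram. -/
noncomputable def kappa (f : ℤ → ℤ) : ℤ :=
  ∑ᶠ i ∈ {i : ℤ | f i = 1}, (if Even i then (1 : ℤ) else -1)

/-- Move the black ball at position `i` to position `j`. -/
def moveBall (f : ℤ → ℤ) (i j : ℤ) : ℤ → ℤ :=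
  Function.update (Function.update f i 0) j 1

/-- One slide of a black ball along a solid arrow (from its source `i` to a target
`j ∈ ⟵i▲`), or backwards along a dashed arrow (from its target `i` back to its source
`j`, where `i ∈ j⇢▼`). -/
def Slide (f f' : ℤ → ℤ) : Prop :=
  ∃ i j, ((f i = 1 ∧ j ∈ solidT f i) ∨ (f j ≠ 1 ∧ i ∈ dashT f j)) ∧ f' = moveBall f i j

lemma bg_cases (f : ℤ → ℤ) (i : ℤ) : bg f i = 1 ∨ bg f i = -1 := by
  unfold bg; split <;> simp

lemma bg_eq_one {f : ℤ → ℤ} {i : ℤ} (h : f i = 1) : bg f i = 1 := by simp [bg, h]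
lemma bg_eq_neg {f : ℤ → ℤ} {i : ℤ} (h : f i ≠ 1) : bg f i = -1 := by simp [bg, h]
lemma f_eq_one_of_bg {f : ℤ → ℤ} {i : ℤ} (h : 0 ≤ bg f i) : f i = 1 := by
  by_contra hc; rw [bg_eq_neg hc] at h; omega
lemma f_ne_one_of_bg {f : ℤ → ℤ} {i : ℤ} (h : bg f i ≤ 0) : f i ≠ 1 := by
  intro hc; rw [bg_eq_one hc] at h; omega

lemma Icc_insert_left {a b : ℤ} (h : a ≤ b) : Finset.Icc a b = insert a (Finset.Icc (a+1) b) := by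
  ext x; simp only [Finset.mem_Icc, Finset.mem_insert]; omega

lemma Icc_insert_right {a b : ℤ} (h : a ≤ b) : Finset.Icc a b = insert b (Finset.Icc a (b-1)) := by
  ext x; simp only [Finset.mem_Icc, Finset.mem_insert]; omega

lemma sum_bg_left {f : ℤ → ℤ} {a b : ℤ} (h : a ≤ b) :
    ∑ s ∈ Finset.Icc a b, bg f s = bg f a + ∑ s ∈ Finset.Icc (a+1) b, bg f s := by
  rw [Icc_insert_left h, Finset.sum_insert (by simp only [Finset.mem_Icc]; omega)]

lemma sum_bg_right {f : ℤ → ℤ} {a b : ℤ} (h : a ≤ b) :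
    ∑ s ∈ Finset.Icc a b, bg f s = bg f b + ∑ s ∈ Finset.Icc a (b-1), bg f s := by
  rw [Icc_insert_right h, Finset.sum_insert (by simp only [Finset.mem_Icc]; omega)]

lemma even_of_sum_bg_zero {f : ℤ → ℤ} {a b : ℤ} (hab : a ≤ b + 1)
    (h : ∑ s ∈ Finset.Icc a b, bg f s = 0) : Even (b + 1 - a) := by
  have h2 := Finset.sum_int_mod (Finset.Icc a b) 2 (bg f)
  have h3 : ∀ s ∈ Finset.Icc a b, bg f s % 2 = 1 := by
    intro s _; rcases bg_cases f s with h|h <;> simp [h]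
  rw [Finset.sum_congr rfl h3, h, Finset.sum_const, Int.card_Icc] at h2
  simp only [nsmul_eq_mul, mul_one] at h2
  have h4 : ((b + 1 - a).toNat : ℤ) = b + 1 - a := Int.toNat_of_nonneg (by omega)
  rw [Int.even_iff]; omega

lemma moveBall_apply (f : ℤ → ℤ) (i j k : ℤ) :
    moveBall f i j k = if k = j then 1 else if k = i then 0 else f k := by
  simp [moveBall, Function.update_apply]

lemma slide_spec {f f' : ℤ → ℤ} (h : Slide f f') :
    ∃ i j, f i = 1 ∧ f j ≠ 1 ∧ j < i ∧ Even (i - j) ∧ f' = moveBall f i j := by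
  obtain ⟨i, j, hcond, hf'⟩ := h
  rcases hcond with ⟨hfi, hj, hr0, hr⟩ | ⟨hfj, hj, hr0, hr⟩
  · -- solid arrow
    unfold rpl at hr0
    have hev : Even (i - j) := by
      have := even_of_sum_bg_zero (by omega) hr0
      have he : i - 1 + 1 - j = i - j := by ring
      rwa [he] at this
    have hgap : j + 2 ≤ i := by obtain ⟨c, hc⟩ := hev; omega
    have hsplit := sum_bg_left (f := f) (a := j) (b := i - 1) (by omega)
    have hge : 0 ≤ rpl f i (j+1) := hr (j+1) (by omega) (by omega)
    unfold rpl at hge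
    have hbg : bg f j ≤ 0 := by omega
    exact ⟨i, j, hfi, f_ne_one_of_bg hbg, hj, hev, hf'⟩
  · -- dashed arrow
    unfold rmi at hr0
    have hsum : ∑ s ∈ Finset.Icc (j+1) i, bg f s = 0 := by omega
    have hev : Even (i - j) := by
      have := even_of_sum_bg_zero (by omega) hsum
      have he : i + 1 - (j + 1) = i - j := by ring
      rwa [he] at this
    have hgap : j + 2 ≤ i := by obtain ⟨c, hc⟩ := hev; omega
    have hsplit := sum_bg_right (f := f) (a := j + 1) (b := i) (by omega)
    have hge : 0 ≤ rmi f (i-1) j := hr (i-1) (by omega) (by omega)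
    unfold rmi at hge
    have hbg : 0 ≤ bg f i := by omega
    exact ⟨i, j, f_eq_one_of_bg hbg, hfj, hj, hev, hf'⟩

lemma ballset_moveBall {f : ℤ → ℤ} {i j : ℤ} (hij : i ≠ j) :
    {k | moveBall f i j k = 1} = insert j ({k | f k = 1} \ {i}) := by
  ext k
  simp only [Set.mem_setOf_eq, Set.mem_insert_iff, Set.mem_diff, Set.mem_singleton_iff,
    moveBall_apply]
  by_cases h1 : k = j
  · simp [h1]
  · by_cases h2 : k = i
    · simp [h1, h2, hij]
    · simp [h1, h2]

lemma kappa_moveBall {f : ℤ → ℤ} {i j : ℤ} (hfi : f i = 1) (hfj : f j ≠ 1) (hij : i ≠ j)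
    (hpar : Even i ↔ Even j) : kappa (moveBall f i j) = kappa f := by
  classical
  set c : ℤ → ℤ := fun k => if Even k then (1 : ℤ) else -1 with hc
  have hcne : ∀ k, c k ≠ 0 := by intro k; simp only [hc]; split <;> simp
  have hcij : c i = c j := by
    by_cases h : Even i
    · simp [hc, h, hpar.mp h]
    · have hj : ¬ Even j := fun hjj => h (hpar.mpr hjj)
      simp [hc, h, hj]
  have hsupp : Function.support c = Set.univ := by
    ext k; simp [Function.mem_support, hcne k]
  have hset := ballset_moveBall (f := f) hij
  by_cases hfin : {k | f k = 1}.Finite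
  · have hfin' : {k | moveBall f i j k = 1}.Finite := by
      rw [hset]; exact ((hfin.diff).insert j)
    unfold kappa
    have e1 : {k | f k = 1} = (hfin.toFinset : Set ℤ) := (Set.Finite.coe_toFinset hfin).symm
    have e2 : {k | moveBall f i j k = 1} = ((insert j (hfin.toFinset.erase i) : Finset ℤ) : Set ℤ) := by
      rw [hset]; push_cast
      rw [Set.Finite.coe_toFinset]
    rw [e1, e2, finsum_mem_coe_finset, finsum_mem_coe_finset]
    have hjmem : j ∉ hfin.toFinset.erase i := by
      simp [Set.Finite.mem_toFinset, hfj]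
    have himem : i ∈ hfin.toFinset := by simp [Set.Finite.mem_toFinset, hfi]
    rw [Finset.sum_insert hjmem, Finset.sum_erase_eq_sub himem]
    show c j + ((∑ x ∈ hfin.toFinset, c x) - c i) = ∑ x ∈ hfin.toFinset, c x
    rw [hcij]; ring
  · have hfin' : ¬ {k | moveBall f i j k = 1}.Finite := by
      rw [hset]; intro h
      exact hfin (((h.subset (Set.subset_insert _ _)).union (Set.finite_singleton i)).subset
        (by intro x hx; by_cases hxi : x = i <;> simp [hxi, hx]))
    unfold kappa
    rw [finsum_mem_eq_zero_of_infinite, finsum_mem_eq_zero_of_infinite]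
    · rw [hsupp, Set.inter_univ]; exact hfin
    · rw [hsupp, Set.inter_univ]; exact hfin'

lemma kappa_of_slide {f f' : ℤ → ℤ} (h : Slide f f') : kappa f' = kappa f := by
  obtain ⟨i, j, hfi, hfj, hji, hev, rfl⟩ := slide_spec h
  exact kappa_moveBall hfi hfj (by omega) (by rwa [Int.even_sub] at hev)

lemma eqv_kappa {f f' : ℤ → ℤ} (h : Relation.EqvGen Slide f f') : kappa f = kappa f' := by
  induction h with
  | rel _ _ h => exact (kappa_of_slide h).symm
  | refl => rfl
  | symm _ _ _ ih => exact ih.symm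
  | trans _ _ _ _ _ ih1 ih2 => exact ih1.trans ih2

lemma slide_step {f : ℤ → ℤ} {i : ℤ} (hfi : f i = 1) (hfj : f (i-2) ≠ 1) :
    Slide f (moveBall f i (i-2)) := by
  by_cases h1 : f (i-1) = 1
  · refine ⟨i, i-2, Or.inl ⟨hfi, ?_, ?_, ?_⟩, rfl⟩
    · omega
    · show rpl f i (i-2) = 0
      unfold rpl
      have hicc : Finset.Icc (i-2) (i-1) = {i-2, i-1} := by
        ext x; simp only [Finset.mem_Icc, Finset.mem_insert, Finset.mem_singleton]; omega
      rw [hicc, Finset.sum_insert (by simp only [Finset.mem_singleton]; omega),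
        Finset.sum_singleton, bg_eq_neg hfj, bg_eq_one h1]
      ring
    · intro s hs1 hs2
      have hs : s = i - 1 := by omega
      subst hs
      unfold rpl
      rw [show Finset.Icc (i-1) (i-1) = {i-1} from Finset.Icc_self _,
        Finset.sum_singleton, bg_eq_one h1]
      omega
  · refine ⟨i, i-2, Or.inr ⟨hfj, ?_, ?_, ?_⟩, rfl⟩
    · omega
    · show rmi f i (i-2) = 0
      unfold rmi
      have hicc : Finset.Icc (i-2+1) i = {i-1, i} := by
        ext x; simp only [Finset.mem_Icc, Finset.mem_insert, Finset.mem_singleton]; omega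
      rw [hicc, Finset.sum_insert (by simp only [Finset.mem_singleton]; omega),
        Finset.sum_singleton, bg_eq_neg h1, bg_eq_one hfi]
      ring
    · intro s hs1 hs2
      have hs : s = i - 1 := by omega
      subst hs
      unfold rmi
      rw [show Finset.Icc (i-2+1) (i-1) = {i-1} by
          rw [show i-2+1 = i-1 by ring]; exact Finset.Icc_self _,
        Finset.sum_singleton, bg_eq_neg h1]
      omega

lemma slide_step_right {f : ℤ → ℤ} {i : ℤ} (hfi : f i = 1) (h2 : f (i+2) = 0) :
    Relation.EqvGen Slide f (moveBall f i (i+2)) := by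
  set g := moveBall f i (i+2) with hg
  have hgi2 : g (i+2) = 1 := by simp [hg, moveBall_apply]
  have hgi : g (i+2-2) ≠ 1 := by
    simp only [hg, moveBall_apply]
    split_ifs <;> first | omega | (intro hc; rw [show i+2-2 = i by ring] at *; omega)
  have hs : Slide g (moveBall g (i+2) (i+2-2)) := slide_step hgi2 hgi
  have heq : moveBall g (i+2) (i+2-2) = f := by
    funext k
    simp only [hg, moveBall_apply]
    split_ifs <;> first | rfl | omega | simp_all | (subst_vars; omega)
  rw [heq] at hs
  exact Relation.EqvGen.symm _ _ (Relation.EqvGen.rel _ _ hs)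

lemma moveBall_01 {f : ℤ → ℤ} (h01 : ∀ k, f k = 0 ∨ f k = 1) (i j : ℤ) :
    ∀ k, moveBall f i j k = 0 ∨ moveBall f i j k = 1 := by
  intro k
  rw [moveBall_apply]
  split_ifs with h1 h2
  · right; rfl
  · left; rfl
  · exact h01 k

lemma move_right : ∀ (d : ℕ) (f : ℤ → ℤ) (a : ℤ), (∀ k, f k = 0 ∨ f k = 1) →
    f a = 1 → f (a + 2*d + 2) = 0 →
    Relation.EqvGen Slide f (moveBall f a (a + 2*d + 2)) := by
  intro d
  induction d with
  | zero =>
    intro f a h01 ha hb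
    have := slide_step_right ha (by rw [show a + 2 = a + 2*(0:ℕ) + 2 by push_cast; ring]; exact hb)
    rwa [show a + 2*(0:ℕ) + 2 = a + 2 by push_cast; ring]
  | succ d ih =>
    intro f a h01 ha hb
    set b : ℤ := a + 2*(d+1:ℕ) + 2 with hbdef
    have hbval : b = a + 2 + 2*d + 2 := by rw [hbdef]; push_cast; ring
    have hba : b ≠ a := by omega
    have hba2 : b ≠ a + 2 := by omega
    by_cases h2 : f (a+2) = 1
    · have hb' : f ((a+2) + 2*d + 2) = 0 := by
        rw [show (a+2) + 2*(d:ℤ) + 2 = a + 2 + 2*d + 2 by ring, ← hbval]; exact hb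
      have step1 : Relation.EqvGen Slide f (moveBall f (a+2) ((a+2) + 2*d + 2)) :=
        ih f (a+2) h01 h2 hb'
      set g := moveBall f (a+2) ((a+2) + 2*d + 2) with hg
      have hga : g a = 1 := by
        simp only [hg, moveBall_apply]
        split_ifs <;> first | omega | exact ha
      have hga2 : g (a+2) = 0 := by
        simp only [hg, moveBall_apply]
        split_ifs <;> first | rfl | omega
      have step2 := slide_step_right hga hga2
      have heq : moveBall g a (a+2) = moveBall f a b := by
        funext k
        simp only [hg, moveBall_apply]
        split_ifs <;> first | rfl | omega | simp_all
      rw [heq] at step2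
      exact Relation.EqvGen.trans _ _ _ step1 step2
    · have hf2 : f (a+2) = 0 := (h01 (a+2)).resolve_right h2
      have step1 : Relation.EqvGen Slide f (moveBall f a (a+2)) := slide_step_right ha hf2
      set g := moveBall f a (a+2) with hg
      have hg01 := moveBall_01 h01 a (a+2)
      have hga2 : g (a+2) = 1 := by simp [hg, moveBall_apply]
      have hgb : g ((a+2) + 2*d + 2) = 0 := by
        simp only [hg, moveBall_apply]
        split_ifs <;> first | rfl | omega |
          (rw [show (a+2) + 2*(d:ℤ) + 2 = a + 2 + 2*d + 2 by ring, ← hbval]; exact hb)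
      have step2 := ih g (a+2) hg01 hga2 hgb
      have heq : moveBall g (a+2) ((a+2) + 2*d + 2) = moveBall f a b := by
        funext k
        simp only [hg, moveBall_apply]
        split_ifs <;> first | rfl | omega | simp_all
      rw [heq] at step2
      exact Relation.EqvGen.trans _ _ _ step1 step2

lemma move_any {f : ℤ → ℤ} {a b : ℤ} (h01 : ∀ k, f k = 0 ∨ f k = 1) (ha : f a = 1)
    (hb : f b = 0) (hev : Even (b - a)) : Relation.EqvGen Slide f (moveBall f a b) := by
  rcases lt_trichotomy a b with h | h | h
  · obtain ⟨c, hc⟩ := hev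
    have hc1 : 1 ≤ c := by omega
    obtain ⟨d, hd⟩ : ∃ d : ℕ, c = (d : ℤ) + 1 := ⟨(c-1).toNat, by omega⟩
    have hbeq : b = a + 2*d + 2 := by omega
    rw [hbeq] at hb ⊢
    exact move_right d f a h01 ha hb
  · exfalso; rw [h] at ha; omega
  · set g := moveBall f a b with hg
    have hg01 := moveBall_01 h01 a b
    have hgb : g b = 1 := by simp [hg, moveBall_apply]
    have hga : g a = 0 := by
      simp only [hg, moveBall_apply]
      split_ifs <;> first | rfl | omega
    obtain ⟨c, hc⟩ := hev
    have hc1 : c ≤ -1 := by omega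
    obtain ⟨d, hd⟩ : ∃ d : ℕ, c = -((d : ℤ) + 1) := ⟨(-c-1).toNat, by omega⟩
    have haeq : a = b + 2*d + 2 := by omega
    have step : Relation.EqvGen Slide g (moveBall g b (b + 2*d + 2)) :=
      move_right d g b hg01 hgb (by rw [← haeq]; exact hga)
    have heq : moveBall g b (b + 2*d + 2) = f := by
      funext k
      simp only [hg, moveBall_apply, ← haeq]
      split_ifs <;> first | rfl | omega | simp_all
    rw [heq] at step
    exact Relation.EqvGen.symm _ _ step

/-- The characteristic function of a finset. -/
def chi (S : Finset ℤ) : ℤ → ℤ := fun i => if i ∈ S then 1 else 0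

lemma chi_01 (S : Finset ℤ) : ∀ k, chi S k = 0 ∨ chi S k = 1 := by
  intro k; unfold chi; split <;> simp

lemma chi_eq_one {S : Finset ℤ} {k : ℤ} : chi S k = 1 ↔ k ∈ S := by
  unfold chi; split <;> simp_all

lemma existsSwapPar (p : ℤ → Prop) [DecidablePred p] {S S' : Finset ℤ}
    (hcard : (S.filter p).card = (S'.filter p).card) {a : ℤ} (haS : a ∈ S) (haS' : a ∉ S')
    (hpa : p a) : ∃ b, b ∈ S' ∧ b ∉ S ∧ p b := by
  by_contra hcon
  push_neg at hcon
  have hsub : S'.filter p ⊆ S.filter p := by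
    intro x hx
    rw [Finset.mem_filter] at hx ⊢
    refine ⟨?_, hx.2⟩
    by_contra hxS
    exact (hcon x hx.1 hxS) hx.2
  have heq := Finset.eq_of_subset_of_card_le hsub hcard.le
  have : a ∈ S'.filter p := heq ▸ (Finset.mem_filter.mpr ⟨haS, hpa⟩)
  exact haS' (Finset.mem_filter.mp this).1

lemma conn : ∀ (N : ℕ) (S S' : Finset ℤ), (S \ S').card ≤ N →
    (S.filter (fun i => Even i)).card = (S'.filter (fun i => Even i)).card →
    S.card = S'.card → Relation.EqvGen Slide (chi S) (chi S') := by
  intro N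
  induction N with
  | zero =>
    intro S S' hN he hc
    have h0 : S \ S' = ∅ := Finset.card_eq_zero.mp (Nat.le_zero.mp hN)
    have hsub : S ⊆ S' := by rwa [Finset.sdiff_eq_empty_iff_subset] at h0
    rw [Finset.eq_of_subset_of_card_le hsub hc.ge]
    exact Relation.EqvGen.refl _
  | succ N ih =>
    intro S S' hN he hc
    by_cases hSS : S = S'
    · rw [hSS]; exact Relation.EqvGen.refl _
    have hA : (S \ S').Nonempty := by
      rw [Finset.sdiff_nonempty]
      intro hsub
      exact hSS (Finset.eq_of_subset_of_card_le hsub hc.ge)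
    obtain ⟨a, haSd⟩ := hA
    rw [Finset.mem_sdiff] at haSd
    obtain ⟨haS, haS'⟩ := haSd
    have ho : (S.filter (fun i => ¬ Even i)).card = (S'.filter (fun i => ¬ Even i)).card := by
      have h1 := Finset.card_filter_add_card_filter_not (s := S) (p := fun i => Even i)
      have h2 := Finset.card_filter_add_card_filter_not (s := S') (p := fun i => Even i)
      omega
    obtain ⟨b, hbS', hbS, hpar⟩ :
        ∃ b, b ∈ S' ∧ b ∉ S ∧ (Even b ↔ Even a) := by
      by_cases hea : Even a
      · obtain ⟨b, h1, h2, h3⟩ := existsSwapPar (fun i => Even i) he haS haS' hea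
        exact ⟨b, h1, h2, by simp [h3, hea]⟩
      · obtain ⟨b, h1, h2, h3⟩ := existsSwapPar (fun i => ¬ Even i) ho haS haS' hea
        exact ⟨b, h1, h2, by simp [h3, hea]⟩
    have hab : a ≠ b := fun h => hbS (h ▸ haS)
    set S₂ : Finset ℤ := insert b (S.erase a) with hS₂
    have hS₂mem : ∀ x, x ∈ S₂ ↔ (x = b ∨ (x ≠ a ∧ x ∈ S)) := by
      intro x; simp [hS₂, Finset.mem_insert, Finset.mem_erase]
    -- step 1 : chi S ~ chi S₂
    have hmove : chi S₂ = moveBall (chi S) a b := by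
      funext k
      simp only [chi, moveBall_apply]
      by_cases hk1 : k = b
      · rw [if_pos hk1, if_pos ((hS₂mem k).mpr (Or.inl hk1))]
      · rw [if_neg hk1]
        by_cases hk2 : k = a
        · rw [if_pos hk2, if_neg (by
            rw [hS₂mem k]; push_neg
            exact ⟨hk1, fun h => absurd hk2 h⟩)]
        · rw [if_neg hk2]
          by_cases hk3 : k ∈ S
          · rw [if_pos hk3, if_pos ((hS₂mem k).mpr (Or.inr ⟨hk2, hk3⟩))]
          · rw [if_neg hk3, if_neg (by
              rw [hS₂mem k]; push_neg
              exact ⟨hk1, fun _ => hk3⟩)]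
    have step1 : Relation.EqvGen Slide (chi S) (chi S₂) := by
      rw [hmove]
      exact move_any (chi_01 S) (chi_eq_one.mpr haS)
        (by simp [chi, hbS]) (Int.even_sub.mpr (by tauto))
    -- step 2 : chi S₂ ~ chi S' by induction
    have hbe : b ∉ S.erase a := fun h => hbS (Finset.mem_erase.mp h).2
    have hcard2 : S₂.card = S.card := by
      rw [hS₂, Finset.card_insert_of_notMem hbe, Finset.card_erase_of_mem haS]
      have : 0 < S.card := Finset.card_pos.mpr ⟨a, haS⟩
      omega
    have hsd : S₂ \ S' = (S \ S').erase a := by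
      ext x
      simp only [Finset.mem_sdiff, Finset.mem_erase, hS₂mem x]
      constructor
      · rintro ⟨hx | ⟨hxa, hxS⟩, hxS'⟩
        · exact absurd (hx ▸ hbS') hxS'
        · exact ⟨hxa, hxS, hxS'⟩
      · rintro ⟨hxa, hxS, hxS'⟩
        exact ⟨Or.inr ⟨hxa, hxS⟩, hxS'⟩
    have hsdcard : (S₂ \ S').card ≤ N := by
      rw [hsd, Finset.card_erase_of_mem (Finset.mem_sdiff.mpr ⟨haS, haS'⟩)]
      omega
    have hfe : (S₂.filter (fun i => Even i)).card = (S.filter (fun i => Even i)).card := by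
      by_cases hea : Even a
      · have heb : Even b := hpar.mpr hea
        have : S₂.filter (fun i => Even i) = insert b ((S.filter (fun i => Even i)).erase a) := by
          ext x
          simp only [Finset.mem_filter, Finset.mem_insert, Finset.mem_erase, hS₂mem x]
          constructor
          · rintro ⟨hx | ⟨hxa, hxS⟩, hev⟩
            · exact Or.inl hx
            · exact Or.inr ⟨hxa, hxS, hev⟩
          · rintro (rfl | ⟨hxa, hxS, hev⟩)
            · exact ⟨Or.inl rfl, heb⟩
            · exact ⟨Or.inr ⟨hxa, hxS⟩, hev⟩
        rw [this, Finset.card_insert_of_notMem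
            (fun h => hbS (Finset.mem_filter.mp (Finset.mem_erase.mp h).2).1),
          Finset.card_erase_of_mem (Finset.mem_filter.mpr ⟨haS, hea⟩)]
        exact Nat.sub_add_cancel
          (Finset.card_pos.mpr ⟨a, Finset.mem_filter.mpr ⟨haS, hea⟩⟩)
      · have heb : ¬ Even b := fun h => hea (hpar.mp h)
        have : S₂.filter (fun i => Even i) = S.filter (fun i => Even i) := by
          ext x
          simp only [Finset.mem_filter, hS₂mem x]
          constructor
          · rintro ⟨hx | ⟨hxa, hxS⟩, hev⟩
            · exact absurd (hx ▸ hev) heb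
            · exact ⟨hxS, hev⟩
          · rintro ⟨hxS, hev⟩
            exact ⟨Or.inr ⟨fun h => hea (h ▸ hev), hxS⟩, hev⟩
        rw [this]
    have step2 : Relation.EqvGen Slide (chi S₂) (chi S') :=
      ih S₂ S' hsdcard (hfe.trans he) (hcard2.trans hc)
    exact Relation.EqvGen.trans _ _ _ step1 step2

lemma chi_ballset (S : Finset ℤ) : {i : ℤ | chi S i = 1} = ↑S := by
  ext i; simp [Set.mem_setOf_eq, chi_eq_one]

lemma kappa_chi (S : Finset ℤ) :
    kappa (chi S) = ((S.filter (fun i => Even i)).card : ℤ)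
      - ((S.filter (fun i => ¬ Even i)).card : ℤ) := by
  unfold kappa
  rw [chi_ballset, finsum_mem_coe_finset, Finset.sum_ite]
  rw [Finset.sum_const, Finset.sum_const, nsmul_eq_mul, nsmul_eq_mul, mul_one, mul_neg_one]
  ring

lemma wd_repr {f : ℤ → ℤ} {n : ℕ} (hf : IsWD f n) :
    ∃ S : Finset ℤ, f = chi S ∧ S.card = n := by
  refine ⟨hf.2.1.toFinset, ?_, ?_⟩
  · funext i
    simp only [chi, Set.Finite.mem_toFinset, Set.mem_setOf_eq]
    rcases hf.1 i with h | h <;> simp [h]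
  · rw [← Set.ncard_coe_finset, Set.Finite.coe_toFinset]
    exact hf.2.2


/-- for weight diagrams with `n` black balls, the equivalence relation
generated by single slides along solid or dashed arrows has equivalence classes exactly
the level sets of `κ`; moreover `κ` takes exactly the values `{-n, -n+2, ..., n-2, n}`. -/
theorem stmt17 (n : ℕ) :
    (∀ f f' : ℤ → ℤ, IsWD f n → IsWD f' n →
        (Relation.EqvGen Slide f f' ↔ kappa f = kappa f')) ∧
    (∀ f : ℤ → ℤ, IsWD f n → ∃ m : ℕ, m ≤ n ∧ kappa f = (n : ℤ) - 2 * m) ∧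
    (∀ m : ℕ, m ≤ n → ∃ f : ℤ → ℤ, IsWD f n ∧ kappa f = (n : ℤ) - 2 * m) := by
  refine ⟨?_, ?_, ?_⟩
  · intro f f' hf hf'
    constructor
    · exact eqv_kappa
    · intro hk
      obtain ⟨S, rfl, hcS⟩ := wd_repr hf
      obtain ⟨S', rfl, hcS'⟩ := wd_repr hf'
      rw [kappa_chi, kappa_chi] at hk
      have h1 := Finset.card_filter_add_card_filter_not (s := S) (p := fun i => Even i)
      have h2 := Finset.card_filter_add_card_filter_not (s := S') (p := fun i => Even i)
      exact conn ((S \ S').card) S S' le_rfl (by omega) (by omega)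
  · intro f hf
    obtain ⟨S, rfl, hcS⟩ := wd_repr hf
    refine ⟨(S.filter (fun i => ¬ Even i)).card, ?_, ?_⟩
    · rw [← hcS]; exact Finset.card_filter_le _ _
    · rw [kappa_chi]
      have h1 := Finset.card_filter_add_card_filter_not (s := S) (p := fun i => Even i)
      omega
  · intro m hm
    set T : Finset ℤ := ((Finset.range (n-m)).image (fun j : ℕ => (2*(j:ℤ)))) ∪
      ((Finset.range m).image (fun j : ℕ => (2*(j:ℤ)+1))) with hT
    have hinj1 : Function.Injective (fun j : ℕ => (2*(j:ℤ))) := by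
      intro x y h; dsimp only at h; omega
    have hinj2 : Function.Injective (fun j : ℕ => (2*(j:ℤ)+1)) := by
      intro x y h; dsimp only at h; omega
    have hmem : ∀ x : ℤ, x ∈ T ↔
        ((∃ j < n - m, (2*(j:ℤ)) = x) ∨ (∃ j < m, (2*(j:ℤ)+1) = x)) := by
      intro x
      simp [hT, Finset.mem_union, Finset.mem_image, Finset.mem_range]
    have hdisj : Disjoint ((Finset.range (n-m)).image (fun j : ℕ => (2*(j:ℤ))))
        ((Finset.range m).image (fun j : ℕ => (2*(j:ℤ)+1))) := by
      rw [Finset.disjoint_left]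
      intro x hx1 hx2
      simp only [Finset.mem_image, Finset.mem_range] at hx1 hx2
      obtain ⟨j1, _, h1⟩ := hx1
      obtain ⟨j2, _, h2⟩ := hx2
      omega
    have hcT : T.card = n := by
      rw [hT, Finset.card_union_of_disjoint hdisj,
        Finset.card_image_of_injective _ hinj1, Finset.card_image_of_injective _ hinj2,
        Finset.card_range, Finset.card_range]
      omega
    have hfe : T.filter (fun i => Even i) = (Finset.range (n-m)).image (fun j : ℕ => (2*(j:ℤ))) := by
      ext x
      simp only [Finset.mem_filter, hmem x, Finset.mem_image, Finset.mem_range]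
      constructor
      · rintro ⟨⟨j, hj, hx⟩ | ⟨j, hj, hx⟩, hev⟩
        · exact ⟨j, hj, hx⟩
        · exfalso; rw [Int.even_iff] at hev; omega
      · rintro ⟨j, hj, hx⟩
        exact ⟨Or.inl ⟨j, hj, hx⟩, by rw [Int.even_iff]; omega⟩
    have hfo : T.filter (fun i => ¬ Even i) = (Finset.range m).image (fun j : ℕ => (2*(j:ℤ)+1)) := by
      ext x
      simp only [Finset.mem_filter, hmem x, Finset.mem_image, Finset.mem_range]
      constructor
      · rintro ⟨⟨j, hj, hx⟩ | ⟨j, hj, hx⟩, hev⟩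
        · exfalso; rw [Int.even_iff] at hev; omega
        · exact ⟨j, hj, hx⟩
      · rintro ⟨j, hj, hx⟩
        exact ⟨Or.inr ⟨j, hj, hx⟩, by rw [Int.even_iff]; omega⟩
    refine ⟨chi T, ⟨chi_01 T, ?_, ?_⟩, ?_⟩
    · rw [chi_ballset]; exact T.finite_toSet
    · rw [chi_ballset, Set.ncard_coe_finset, hcT]
    · rw [kappa_chi, hfe, hfo, Finset.card_image_of_injective _ hinj1,
        Finset.card_image_of_injective _ hinj2, Finset.card_range, Finset.card_range]
      omega
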